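/- Let γ be a locally finite subset of the Euclidean plane ℝ² and let 𝒞 be an open Euclidean ball. Consider the simple graph whose vertex set is γ ∩ 𝒞 and in which two distinct points x, y ∈ γ ∩ 𝒞 are adjacent if and only if there exists a closed disk having x and y on its boundary circle and whose interior contains no point of γ (i.e. {x,y} is an edge of the Delaunay triangulation of γ). Then this graph is connected. -/

import Mathlib

open scoped RealInnerProductSpace

/-- Shrink a disk: given `x` on the boundary of `closedBall m r` and `z` in its interior,
there is a sub-disk through `x` and `z` on its boundary, contained in the original disk. -/
lemma shrinkDisk {F : Type*} [NormedAddCommGroup F] [InnerProductSpace ℝ F]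
    (m x z : F) (r : ℝ) (hx : dist x m = r) (hz : dist z m < r) :
    ∃ (m' : F) (r' : ℝ), dist x m' = r' ∧ dist z m' = r' ∧ r' + dist m' m ≤ r ∧ 0 < r' := by
  have hr : 0 < r := lt_of_le_of_lt dist_nonneg hz
  set a := z - x with ha
  set b := m - x with hb
  have hbn : ‖b‖ = r := by rw [hb, ← dist_eq_norm, dist_comm]; exact hx
  have hab : ‖a - b‖ < r := by
    have : a - b = z - m := by rw [ha, hb]; abel
    rw [this, ← dist_eq_norm]; exact hz
  have key : ‖a‖ ^ 2 < 2 * ⟪a, b⟫ := by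
    have h1 : ‖a - b‖ ^ 2 = ‖a‖ ^ 2 - 2 * ⟪a, b⟫ + ‖b‖ ^ 2 := norm_sub_sq_real a b
    nlinarith [norm_nonneg (a - b), norm_nonneg b]
  have hanz : a ≠ 0 := by
    intro h
    rw [h] at key
    simp at key
  have han : 0 < ‖a‖ := norm_pos_iff.mpr hanz
  set s := ⟪a, b⟫ with hs
  have hspos : 0 < s := by nlinarith
  set r' := ‖a‖ ^ 2 * r / (2 * s) with hr'
  have hr'pos : 0 < r' := by positivity
  have hr'le : r' < r := by
    rw [hr', div_lt_iff₀ (by positivity)]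
    nlinarith
  refine ⟨x + (r' / r) • b, r', ?_, ?_, ?_, hr'pos⟩
  · have : x - (x + (r' / r) • b) = -((r' / r) • b) := by abel
    rw [dist_eq_norm, this, norm_neg, norm_smul, hbn, Real.norm_eq_abs,
      abs_of_pos (by positivity)]
    field_simp
  · have h1 : z - (x + (r' / r) • b) = a - (r' / r) • b := by rw [ha]; abel
    have h2 : dist z (x + (r' / r) • b) ^ 2 = r' ^ 2 := by
      rw [dist_eq_norm, h1, norm_sub_sq_real, real_inner_smul_right, norm_smul,
        Real.norm_eq_abs, abs_of_pos (by positivity)]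
      have h2s : 2 * (r' / r) * s = ‖a‖ ^ 2 := by
        rw [hr']; field_simp
      have : (r' / r * ‖b‖) ^ 2 = r' ^ 2 := by
        rw [hbn]; field_simp
      nlinarith [this, h2s]
    have := dist_nonneg (x := z) (y := x + (r' / r) • b)
    nlinarith
  · have h1 : x + (r' / r) • b - m = (r' / r - 1) • b := by
      rw [hb, sub_smul, one_smul]; abel
    have h2 : dist (x + (r' / r) • b) m = (1 - r' / r) * r := by
      rw [dist_eq_norm, h1, norm_smul, Real.norm_eq_abs, hbn,
        abs_of_nonpos (by rw [sub_nonpos, div_le_one hr]; exact hr'le.le)]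
      ring
    rw [h2]; field_simp; linarith

/-- Starting disk: for `x ≠ y` with `dist y c ≤ dist x c`, there is a disk through both
contained in the closed ball of radius `dist x c` around `c`. -/
lemma startDisk {F : Type*} [NormedAddCommGroup F] [InnerProductSpace ℝ F]
    (c x y : F) (hxy : x ≠ y) (hyx : dist y c ≤ dist x c) :
    ∃ (m : F) (r : ℝ), dist x m = r ∧ dist y m = r ∧ dist m c + r ≤ dist x c := by
  set a := x - c with ha
  set b := y - c with hb
  have habnz : a - b ≠ 0 := by
    rw [ha, hb]; intro h; apply hxy; have : x - c - (y - c) = x - y := by abel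
    rw [this] at h; exact sub_eq_zero.mp h
  have habpos : 0 < ‖a - b‖ := norm_pos_iff.mpr habnz
  have hnorm : ‖b‖ ≤ ‖a‖ := by rw [ha, hb, ← dist_eq_norm, ← dist_eq_norm]; exact hyx
  have hexp : ‖a - b‖ ^ 2 = ‖a‖ ^ 2 - 2 * ⟪a, b⟫ + ‖b‖ ^ 2 := norm_sub_sq_real a b
  set d := 2 * (‖a‖ ^ 2 - ⟪a, b⟫) with hd
  have hdpos : 0 < d := by nlinarith [norm_nonneg a, norm_nonneg b]
  set t := (‖a‖ ^ 2 - ‖b‖ ^ 2) / d with ht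
  have ht0 : 0 ≤ t := div_nonneg (by nlinarith [norm_nonneg a, norm_nonneg b]) hdpos.le
  have ht1 : t ≤ 1 := by rw [ht, div_le_one hdpos]; nlinarith
  have htd : t * d = ‖a‖ ^ 2 - ‖b‖ ^ 2 := by rw [ht]; field_simp
  refine ⟨c + t • a, (1 - t) * ‖a‖, ?_, ?_, ?_⟩
  · have h1 : x - (c + t • a) = (1 - t) • a := by rw [ha, sub_smul, one_smul]; abel
    rw [dist_eq_norm, h1, norm_smul, Real.norm_eq_abs, abs_of_nonneg (by linarith)]
  · have h1 : y - (c + t • a) = b - t • a := by rw [ha, hb]; abel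
    have h2 : dist y (c + t • a) ^ 2 = ((1 - t) * ‖a‖) ^ 2 := by
      rw [dist_eq_norm, h1, norm_sub_sq_real, real_inner_smul_right, norm_smul,
        Real.norm_eq_abs, abs_of_nonneg ht0, real_inner_comm]
      nlinarith [htd]
    have h3 := dist_nonneg (x := y) (y := c + t • a)
    have h4 : 0 ≤ (1 - t) * ‖a‖ := mul_nonneg (by linarith) (norm_nonneg a)
    nlinarith
  · have h1 : c + t • a - c = t • a := by abel
    rw [dist_eq_norm, h1, norm_smul, Real.norm_eq_abs, abs_of_nonneg ht0, ha,
      ← dist_eq_norm]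
    have : dist (x - c) 0 = dist x c := by simp [dist_eq_norm]
    nlinarith [dist_nonneg (x := x) (y := c)]


/-- Let `γ` be a locally finite subset of the Euclidean plane and `𝒞` an open Euclidean
ball. Consider the simple graph on the vertex set `γ ∩ 𝒞` in which two distinct points are
adjacent iff there is a closed disk having both of them on its boundary circle and no point
of `γ` in its interior (a Delaunay edge of `γ`). Then this graph is connected. -/
theorem stmt_18 (γ : Set (EuclideanSpace ℝ (Fin 2)))
    (hγ : ∀ s : Set (EuclideanSpace ℝ (Fin 2)), Bornology.IsBounded s → (γ ∩ s).Finite)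
    (c : EuclideanSpace ℝ (Fin 2)) (ρ : ℝ)
    (G : SimpleGraph ↥(γ ∩ Metric.ball c ρ))
    (hG : ∀ a b : ↥(γ ∩ Metric.ball c ρ),
      G.Adj a b ↔ a ≠ b ∧
        ∃ (c' : EuclideanSpace ℝ (Fin 2)) (ρ' : ℝ),
          dist (a : EuclideanSpace ℝ (Fin 2)) c' = ρ' ∧
          dist (b : EuclideanSpace ℝ (Fin 2)) c' = ρ' ∧
          ∀ z ∈ γ, ρ' ≤ dist z c') :
    G.Preconnected := by
  classical
  -- Key induction: if x, y lie on the boundary circle of a closed disk contained in the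
  -- open ball, they are reachable; induct on the number of points of γ in the open disk.
  have key : ∀ n : ℕ, ∀ (m : EuclideanSpace ℝ (Fin 2)) (r : ℝ)
      (x y : ↥(γ ∩ Metric.ball c ρ)),
      dist (x : EuclideanSpace ℝ (Fin 2)) m = r →
      dist (y : EuclideanSpace ℝ (Fin 2)) m = r →
      Metric.closedBall m r ⊆ Metric.ball c ρ →
      (γ ∩ Metric.ball m r).ncard ≤ n → G.Reachable x y := by
    intro n
    induction n using Nat.strong_induction_on with
    | _ n ih =>
      intro m r x y hxm hym hsub hcard
      by_cases hxy : x = y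
      · exact hxy ▸ SimpleGraph.Reachable.refl x
      by_cases hz : ∃ z ∈ γ, dist z m < r
      · obtain ⟨z, hzγ, hzm⟩ := hz
        have hzball : z ∈ Metric.ball c ρ :=
          hsub (Metric.mem_closedBall.mpr hzm.le)
        set z' : ↥(γ ∩ Metric.ball c ρ) := ⟨z, hzγ, hzball⟩ with hz'
        have hfin : (γ ∩ Metric.ball m r).Finite := hγ _ Metric.isBounded_ball
        have hzmem : z ∈ γ ∩ Metric.ball m r := ⟨hzγ, Metric.mem_ball.mpr hzm⟩
        -- a generic step: reach from any boundary vertex to z'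
        have step : ∀ w : ↥(γ ∩ Metric.ball c ρ),
            dist (w : EuclideanSpace ℝ (Fin 2)) m = r → G.Reachable w z' := by
          intro w hwm
          obtain ⟨m', r', hw', hz1', hsum, hr'pos⟩ :=
            shrinkDisk m (w : EuclideanSpace ℝ (Fin 2)) z r hwm hzm
          have hsub' : Metric.closedBall m' r' ⊆ Metric.ball c ρ :=
            (Metric.closedBall_subset_closedBall' hsum).trans hsub
          have hballsub : Metric.ball m' r' ⊆ Metric.ball m r :=
            Metric.ball_subset_ball' hsum
          have hznot : z ∉ Metric.ball m' r' := by
            simp [Metric.mem_ball, hz1']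
          have hsubset : γ ∩ Metric.ball m' r' ⊆ (γ ∩ Metric.ball m r) \ {z} := by
            rintro w' ⟨hw'γ, hw'b⟩
            exact ⟨⟨hw'γ, hballsub hw'b⟩, by rintro rfl; exact hznot hw'b⟩
          have hlt : (γ ∩ Metric.ball m' r').ncard < (γ ∩ Metric.ball m r).ncard := by
            calc (γ ∩ Metric.ball m' r').ncard
                ≤ ((γ ∩ Metric.ball m r) \ {z}).ncard :=
                  Set.ncard_le_ncard hsubset (hfin.subset Set.diff_subset)
              _ < (γ ∩ Metric.ball m r).ncard :=
                  Set.ncard_diff_singleton_lt_of_mem hzmem hfin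
          exact ih (γ ∩ Metric.ball m' r').ncard (lt_of_lt_of_le hlt hcard)
            m' r' w z' hw' hz1' hsub' le_rfl
        exact (step x hxm).trans (step y hym).symm
      · push_neg at hz
        exact ((hG x y).mpr ⟨hxy, m, r, hxm, hym, hz⟩).reachable
  -- Reduce symmetry: it suffices to treat the case dist y c ≤ dist x c.
  have main : ∀ u v : ↥(γ ∩ Metric.ball c ρ),
      dist (v : EuclideanSpace ℝ (Fin 2)) c ≤ dist (u : EuclideanSpace ℝ (Fin 2)) c →
      G.Reachable u v := by
    intro u v hle
    by_cases huv : u = v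
    · exact huv ▸ SimpleGraph.Reachable.refl u
    have hne : (u : EuclideanSpace ℝ (Fin 2)) ≠ (v : EuclideanSpace ℝ (Fin 2)) :=
      fun h => huv (Subtype.ext h)
    obtain ⟨m, r, hum, hvm, hsum⟩ := startDisk c (u : EuclideanSpace ℝ (Fin 2)) v hne hle
    have hu : dist (u : EuclideanSpace ℝ (Fin 2)) c < ρ :=
      Metric.mem_ball.mp u.2.2
    have hsub : Metric.closedBall m r ⊆ Metric.ball c ρ :=
      Metric.closedBall_subset_ball' (by rw [add_comm]; exact lt_of_le_of_lt hsum hu)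
    exact key (γ ∩ Metric.ball m r).ncard m r u v hum hvm hsub le_rfl
  intro u v
  rcases le_total (dist (v : EuclideanSpace ℝ (Fin 2)) c)
      (dist (u : EuclideanSpace ℝ (Fin 2)) c) with h | h
  · exact main u v h
  · exact (main v u h).symm
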